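/- Suppose κ satisfies Assumption 1. Fix j₀ ∈ {k, …, N}. Let x̂^(0), x̂^(1), x̂^(2), … be estimate tuples in S^(N−k+1) and f^(1), f^(2), … randomized policies with f^(i) ∈ 𝔓(x̂^(i−1)) for every i ≥ 1, and suppose there is ε > 0 such that for every i ≥ 1 and every j ∈ {k, …, j₀} the quantity q_j^(i) associated with f^(i) is well-defined and satisfies q_j^(i) ≥ ε. Then for every j ∈ {k, …, j₀}, the set {x̂_j^(i) : i ≥ 0} is a d-bounded subset of S. -/

import Mathlib

open MeasureTheory Filter
open scoped ENNReal NNReal Topology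

noncomputable section

/-- The state space `S = ℝ² × [0, 2π)`. -/
abbrev S : Type := {x : ℝ × ℝ × ℝ // x.2.2 ∈ Set.Ico (0 : ℝ) (2 * Real.pi)}

/-- The metric `d` on `S`. -/
noncomputable def dS (x y : S) : ℝ :=
  Real.sqrt ((x.1.1 - y.1.1) ^ 2 + (x.1.2.1 - y.1.2.1) ^ 2
    + 2 * (Real.cos x.1.2.2 - Real.cos y.1.2.2) ^ 2
    + 2 * (Real.sin x.1.2.2 - Real.sin y.1.2.2) ^ 2)

/-- The initial state `x₀ = (0,0,0)`. -/
def origin : S := ⟨(0, 0, 0), ⟨le_rfl, by positivity⟩⟩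

/-- `κ` is a Markov kernel on `S`. -/
def IsMarkov (κ : S → Measure S) : Prop :=
  (∀ x, IsProbabilityMeasure (κ x)) ∧
    ∀ A : Set S, MeasurableSet A → Measurable fun x => κ x A

/-- Continuity of a real-valued function with respect to the metric `dS`. -/
def DContinuous (g : S → ℝ) : Prop :=
  ∀ x : S, ∀ ε : ℝ, 0 < ε → ∃ δ : ℝ, 0 < δ ∧ ∀ y : S, dS x y < δ → |g y - g x| < ε

/-- Openness with respect to the metric `dS`. -/
def DOpen (O : Set S) : Prop :=
  ∀ x ∈ O, ∃ δ : ℝ, 0 < δ ∧ ∀ y : S, dS x y < δ → y ∈ O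

/-- Assumption 1 on the kernel `κ`. -/
def Assumption1 (κ : S → Measure S) : Prop :=
  (∀ A : Set S, MeasurableSet A → DContinuous fun x => (κ x A).toReal) ∧
    ∀ O : Set S, DOpen O → O.Nonempty → ∀ x : S, 0 < κ x O

/-- Auxiliary downward value recursion; the first argument is the number
`N + 1 - j` of remaining stages. -/
noncomputable def Jaux (κ : S → Measure S) (c' : ℕ → ℝ) (xhat : ℕ → S) :
    ℕ → ℕ → S → ℝ≥0∞
  | 0, _, _ => 0
  | m + 1, j, x =>
      min (ENNReal.ofReal (dS x (xhat j) ^ 2) + ∫⁻ y, Jaux κ c' xhat m (j + 1) y ∂(κ x))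
        (ENNReal.ofReal (c' j))

/-- The optimal cost-to-go `J*_j(x, x̂_{j:N})`. -/
noncomputable def JJ (κ : S → Measure S) (c' : ℕ → ℝ) (N : ℕ) (xhat : ℕ → S)
    (j : ℕ) (x : S) : ℝ≥0∞ :=
  Jaux κ c' xhat (N + 1 - j) j x

/-- `G_j(x, x̂_{j:N}) = ∫ J*_j(y, x̂_{j:N}) κ(x)(dy)`. -/
noncomputable def Gj (κ : S → Measure S) (c' : ℕ → ℝ) (N : ℕ) (xhat : ℕ → S)
    (j : ℕ) (x : S) : ℝ≥0∞ :=
  ∫⁻ y, JJ κ c' N xhat j y ∂(κ x)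

/-- `G(x̂_{k:N}) = G_k(x₀, x̂_{k:N})`. -/
noncomputable def Gtot (κ : S → Measure S) (c' : ℕ → ℝ) (k N : ℕ) (xhat : ℕ → S) : ℝ≥0∞ :=
  Gj κ c' N xhat k origin

/-- A randomized policy: a tuple of Borel measurable functions `f_j : S → [0,1]`. -/
def IsPolicy (k N : ℕ) (f : ℕ → S → ℝ≥0∞) : Prop :=
  ∀ j, k ≤ j → j ≤ N → Measurable (f j) ∧ ∀ x, f j x ≤ 1

/-- Auxiliary cost-to-go recursion for a policy; first argument is `N + 1 - j`. -/
noncomputable def Vaux (κ : S → Measure S) (c' : ℕ → ℝ) (xhat : ℕ → S)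
    (f : ℕ → S → ℝ≥0∞) : ℕ → ℕ → S → ℝ≥0∞
  | 0, _, _ => 0
  | m + 1, j, x =>
      f j x * (ENNReal.ofReal (dS x (xhat j) ^ 2) + ∫⁻ y, Vaux κ c' xhat f m (j + 1) y ∂(κ x))
        + (1 - f j x) * ENNReal.ofReal (c' j)

/-- The cost-to-go `V_j` of a policy `f` with estimates `x̂`. -/
noncomputable def VV (κ : S → Measure S) (c' : ℕ → ℝ) (N : ℕ) (xhat : ℕ → S)
    (f : ℕ → S → ℝ≥0∞) (j : ℕ) (x : S) : ℝ≥0∞ :=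
  Vaux κ c' xhat f (N + 1 - j) j x

/-- The total expected cost `C(f_{k:N}, x̂_{k:N})`. -/
noncomputable def Cost (κ : S → Measure S) (c' : ℕ → ℝ) (k N : ℕ) (xhat : ℕ → S)
    (f : ℕ → S → ℝ≥0∞) : ℝ≥0∞ :=
  ∫⁻ y, VV κ c' N xhat f k y ∂(κ origin)

/-- `f ∈ 𝔓(x̂_{k:N})`: `f` minimizes the cost over all randomized policies. -/
def inP (κ : S → Measure S) (c' : ℕ → ℝ) (k N : ℕ) (xhat : ℕ → S)
    (f : ℕ → S → ℝ≥0∞) : Prop :=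
  IsPolicy k N f ∧
    ∀ g : ℕ → S → ℝ≥0∞, IsPolicy k N g → Cost κ c' k N xhat f ≤ Cost κ c' k N xhat g

/-- `x̂ ∈ 𝔛(f_{k:N})`: the estimates minimize the cost for the policy `f`. -/
def inX (κ : S → Measure S) (c' : ℕ → ℝ) (k N : ℕ) (f : ℕ → S → ℝ≥0∞)
    (xhat : ℕ → S) : Prop :=
  ∀ yhat : ℕ → S, Cost κ c' k N xhat f ≤ Cost κ c' k N yhat f

/-- Conditioning a measure on "no transmission" at stage `j`. -/
noncomputable def condMeas (f : ℕ → S → ℝ≥0∞) (j : ℕ) (μ : Measure S) : Measure S :=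
  (∫⁻ x, f j x ∂μ)⁻¹ • μ.withDensity (f j)

/-- The predicted measures `μ_{j|j−1}`, by recursion on `j - k`. -/
noncomputable def mupredAux (κ : S → Measure S) (f : ℕ → S → ℝ≥0∞) (k : ℕ) :
    ℕ → Measure S
  | 0 => κ origin
  | n + 1 => (condMeas f (k + n) (mupredAux κ f k n)).bind κ

/-- `μ_{j|j−1}`. -/
noncomputable def mupred (κ : S → Measure S) (f : ℕ → S → ℝ≥0∞) (k j : ℕ) : Measure S :=
  mupredAux κ f k (j - k)

/-- `q_j = ∫ f_j dμ_{j|j−1}`. -/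
noncomputable def qq (κ : S → Measure S) (f : ℕ → S → ℝ≥0∞) (k j : ℕ) : ℝ≥0∞ :=
  ∫⁻ x, f j x ∂(mupred κ f k j)

/-- `μ_{j|j}`. -/
noncomputable def mucond (κ : S → Measure S) (f : ℕ → S → ℝ≥0∞) (k j : ℕ) : Measure S :=
  condMeas f j (mupred κ f k j)

/-- Non-degeneracy of a policy. -/
def NonDeg (κ : S → Measure S) (f : ℕ → S → ℝ≥0∞) (k N : ℕ) : Prop :=
  ∀ j, k ≤ j → j ≤ N → 0 < qq κ f k j

/-- The closed "no transmission" region `D̄_j`. -/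
noncomputable def Dbar (κ : S → Measure S) (c' : ℕ → ℝ) (N : ℕ) (xhat : ℕ → S)
    (j : ℕ) : Set S :=
  {x : S | ENNReal.ofReal (dS x (xhat j) ^ 2) + ∫⁻ y, JJ κ c' N xhat (j + 1) y ∂(κ x)
      ≤ ENNReal.ofReal (c' j)}

/-- The open "no transmission" region `Ḏ_j`. -/
noncomputable def Dund (κ : S → Measure S) (c' : ℕ → ℝ) (N : ℕ) (xhat : ℕ → S)
    (j : ℕ) : Set S :=
  {x : S | ENNReal.ofReal (dS x (xhat j) ^ 2) + ∫⁻ y, JJ κ c' N xhat (j + 1) y ∂(κ x)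
      < ENNReal.ofReal (c' j)}

/-- Hypothesis (H). -/
def HypH (κ : S → Measure S) (c' : ℕ → ℝ) (k N : ℕ) : Prop :=
  ∀ j, k ≤ j → j ≤ N → ∃ xhat : ℕ → S, (Dund κ c' N xhat j).Nonempty

/-- Weak convergence of measures on `(S, dS)`: tested against `dS`-continuous
bounded functions. -/
def WeakConvS (μl : ℕ → Measure S) (μ : Measure S) : Prop :=
  ∀ h : S → ℝ, DContinuous h → (∃ C : ℝ, ∀ x, |h x| ≤ C) →
    Tendsto (fun l => ∫ x, h x ∂(μl l)) atTop (𝓝 (∫ x, h x ∂μ))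

/-- Convergence of a sequence of (non-degenerate) policies to a policy. -/
def PolConv (κ : S → Measure S) (k N : ℕ) (g : ℕ → ℕ → S → ℝ≥0∞)
    (f : ℕ → S → ℝ≥0∞) : Prop :=
  ∀ j, k ≤ j → j ≤ N →
    WeakConvS (fun l => mucond κ (g l) k j) (mucond κ f k j) ∧
      Tendsto (fun l => qq κ (g l) k j) atTop (𝓝 (qq κ f k j))

def Phi (x : S) : EuclideanSpace ℝ (Fin 4) :=
  WithLp.toLp 2 ![x.1.1, x.1.2.1, Real.sqrt 2 * Real.cos x.1.2.2, Real.sqrt 2 * Real.sin x.1.2.2]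

lemma dS_eq_dist (x y : S) : dS x y = dist (Phi x) (Phi y) := by
  rw [EuclideanSpace.dist_eq, dS]
  congr 1
  rw [Fin.sum_univ_four]
  simp only [Phi, PiLp.toLp_apply, Real.dist_eq, Matrix.cons_val_zero, Matrix.cons_val_one, Matrix.head_cons,
    Matrix.cons_val_two, Matrix.tail_cons, Matrix.cons_val_three, sq_abs]
  have h2 : Real.sqrt 2 ^ 2 = 2 := Real.sq_sqrt (by norm_num)
  linear_combination ((Real.cos x.1.2.2 - Real.cos y.1.2.2)^2 + (Real.sin x.1.2.2 - Real.sin y.1.2.2)^2) * (-1) * h2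

lemma dS_nonneg (x y : S) : 0 ≤ dS x y := Real.sqrt_nonneg _

lemma dS_triangle (x y z : S) : dS x z ≤ dS x y + dS y z := by
  rw [dS_eq_dist, dS_eq_dist, dS_eq_dist]; exact dist_triangle _ _ _

lemma measurable_dS_right (c : S) : Measurable fun x : S => dS x c := by
  have h : Continuous fun v : ℝ × ℝ × ℝ => Real.sqrt ((v.1 - c.1.1) ^ 2 + (v.2.1 - c.1.2.1) ^ 2
      + 2 * (Real.cos v.2.2 - Real.cos c.1.2.2) ^ 2
      + 2 * (Real.sin v.2.2 - Real.sin c.1.2.2) ^ 2) := by fun_prop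
  exact h.measurable.comp measurable_subtype_coe

section AuxLemmas
open ProbabilityTheory

variable {κ : S → Measure S}

lemma measurable_kappa (hκ : IsMarkov κ) : Measurable κ :=
  Measure.measurable_of_measurable_coe κ hκ.2

/-- The kernel associated to `κ`. -/
noncomputable def kerOf (hκ : IsMarkov κ) : Kernel S S := ⟨κ, measurable_kappa hκ⟩

lemma measurable_lint (hκ : IsMarkov κ) {g : S → ℝ≥0∞} (hg : Measurable g) :
    Measurable fun x => ∫⁻ y, g y ∂(κ x) := by
  haveI : IsMarkovKernel (kerOf hκ) := ⟨fun x => hκ.1 x⟩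
  exact Measurable.lintegral_kernel (κ := kerOf hκ) hg

lemma dS_comm (x y : S) : dS x y = dS y x := by
  rw [dS_eq_dist, dS_eq_dist, dist_comm]

lemma measurable_dS_left (c : S) : Measurable fun x : S => dS c x := by
  simp only [fun x => dS_comm c x]
  exact measurable_dS_right c

lemma measurable_Vaux (hκ : IsMarkov κ) (c' : ℕ → ℝ) (xh : ℕ → S) (f : ℕ → S → ℝ≥0∞) :
    ∀ m j, (∀ l, j ≤ l → l < j + m → Measurable (f l)) →
      Measurable (Vaux κ c' xh f m j)
  | 0, j, _ => by
      have : Vaux κ c' xh f 0 j = fun _ => 0 := rfl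
      rw [this]; exact measurable_const
  | (m+1), j, hf => by
      have h1 : Measurable (Vaux κ c' xh f m (j+1)) :=
        measurable_Vaux hκ c' xh f m (j+1) (fun l hl1 hl2 => hf l (by omega) (by omega))
      have h2 := measurable_lint hκ h1
      have h3 : Measurable fun x : S => ENNReal.ofReal (dS x (xh j) ^ 2) :=
        ENNReal.measurable_ofReal.comp ((measurable_dS_right (xh j)).pow_const 2)
      have hfj := hf j le_rfl (by omega)
      have : Vaux κ c' xh f (m+1) j = fun x =>
          f j x * (ENNReal.ofReal (dS x (xh j) ^ 2)
            + ∫⁻ y, Vaux κ c' xh f m (j + 1) y ∂(κ x))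
          + (1 - f j x) * ENNReal.ofReal (c' j) := rfl
      rw [this]
      exact (hfj.mul (h3.add h2)).add ((measurable_const.sub hfj).mul measurable_const)

lemma cost_zero (hκ : IsMarkov κ) (c' : ℕ → ℝ) (k N : ℕ) (hkN : k ≤ N) (xh : ℕ → S) :
    Cost κ c' k N xh (fun _ _ => 0) = ENNReal.ofReal (c' k) := by
  obtain ⟨m, hm⟩ : ∃ m, N + 1 - k = m + 1 := ⟨N - k, by omega⟩
  have hV : ∀ x, VV κ c' N xh (fun _ _ => 0) k x = ENNReal.ofReal (c' k) := by
    intro x; rw [VV, hm]; simp [Vaux]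
  haveI := hκ.1 origin
  simp only [Cost, hV, lintegral_const, measure_univ, mul_one]

/-- Iterated unconditioned kernel measure from the origin. -/
noncomputable def nuChain (κ : S → Measure S) : ℕ → Measure S
  | 0 => κ origin
  | n+1 => (nuChain κ n).bind κ

lemma nuChain_prob (hκ : IsMarkov κ) : ∀ n, IsProbabilityMeasure (nuChain κ n)
  | 0 => hκ.1 origin
  | (n+1) => by
      haveI := nuChain_prob hκ n
      constructor
      have : nuChain κ (n+1) = (nuChain κ n).bind κ := rfl
      rw [this, Measure.bind_apply MeasurableSet.univ (measurable_kappa hκ).aemeasurable]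
      have h1 : ∀ x : S, κ x Set.univ = 1 := fun x => (hκ.1 x).measure_univ
      simp [h1]

end AuxLemmas

section AuxLemmas2
open ProbabilityTheory

variable {κ : S → Measure S}

lemma lintegral_le_one {μ : Measure S} [IsProbabilityMeasure μ] {g : S → ℝ≥0∞}
    (hg : ∀ x, g x ≤ 1) : ∫⁻ x, g x ∂μ ≤ 1 := by
  calc ∫⁻ x, g x ∂μ ≤ ∫⁻ _, 1 ∂μ := lintegral_mono hg
    _ = 1 := by simp

/-- Probability and domination chain for the predicted measures. -/
lemma mupred_chain (hκ : IsMarkov κ) (f : ℕ → S → ℝ≥0∞) (k j₀ : ℕ)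
    (hf : ∀ l, k ≤ l → l ≤ j₀ → Measurable (f l) ∧ ∀ x, f l x ≤ 1)
    (ε : ℝ≥0∞) (hε : 0 < ε)
    (hq : ∀ j, k ≤ j → j ≤ j₀ → ε ≤ qq κ f k j) :
    ∀ n, k + n ≤ j₀ →
      IsProbabilityMeasure (mupredAux κ f k n) ∧
        ∀ A : Set S, MeasurableSet A → mupredAux κ f k n A ≤ ε⁻¹ ^ n * nuChain κ n A
  | 0, _ => by
      refine ⟨hκ.1 origin, fun A hA => ?_⟩
      simp [mupredAux, nuChain]
  | (n+1), hn => by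
      obtain ⟨hprob, hdom⟩ := mupred_chain hκ f k j₀ hf ε hε hq n (by omega)
      haveI := hprob
      set μ := mupredAux κ f k n with hμ
      have hmeq : mupred κ f k (k + n) = μ := by
        rw [mupred, Nat.add_sub_cancel_left]
      have hfm := (hf (k+n) (by omega) (by omega)).1
      have hf1 := (hf (k+n) (by omega) (by omega)).2
      have hqd : qq κ f k (k+n) = ∫⁻ x, f (k+n) x ∂μ := by rw [qq, hmeq]
      set q := ∫⁻ x, f (k+n) x ∂μ with hqdef
      have hq0 : ε ≤ q := hqd ▸ hq (k+n) (by omega) (by omega)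
      have hq1 : q ≤ 1 := lintegral_le_one hf1
      have hqne0 : q ≠ 0 := fun h => hε.ne' (le_antisymm (h ▸ hq0) bot_le)
      have hqnet : q ≠ ⊤ := (hq1.trans_lt (by norm_num)).ne
      have hwd : ∀ A : Set S, MeasurableSet A →
          (μ.withDensity (f (k+n))) A ≤ μ A := by
        intro A hA
        rw [withDensity_apply _ hA]
        calc ∫⁻ x in A, f (k+n) x ∂μ ≤ ∫⁻ _ in A, 1 ∂μ := lintegral_mono hf1
          _ = μ A := by simp
      have hcond : condMeas f (k+n) μ = q⁻¹ • μ.withDensity (f (k+n)) := by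
        rw [condMeas]
      have hwduniv : (μ.withDensity (f (k+n))) Set.univ = q := by
        rw [withDensity_apply _ MeasurableSet.univ, Measure.restrict_univ]
      have hcondprob : IsProbabilityMeasure (condMeas f (k+n) μ) := by
        constructor
        rw [hcond, Measure.smul_apply, hwduniv, smul_eq_mul, ENNReal.inv_mul_cancel hqne0 hqnet]
      have hstep : mupredAux κ f k (n+1) = (condMeas f (k+n) μ).bind κ := rfl
      constructor
      · haveI := hcondprob
        constructor
        rw [hstep, Measure.bind_apply MeasurableSet.univ (measurable_kappa hκ).aemeasurable]
        have h1 : ∀ x : S, κ x Set.univ = 1 := fun x => (hκ.1 x).measure_univ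
        simp [h1]
      · intro A hA
        have hkA : Measurable fun x => κ x A := hκ.2 A hA
        have e1 : mupredAux κ f k (n+1) A = q⁻¹ * ∫⁻ x, f (k+n) x * κ x A ∂μ := by
          rw [hstep, Measure.bind_apply hA (measurable_kappa hκ).aemeasurable, hcond,
            lintegral_smul_measure, lintegral_withDensity_eq_lintegral_mul μ hfm hkA]
          rfl
        have e2 : ∫⁻ x, f (k+n) x * κ x A ∂μ ≤ ∫⁻ x, κ x A ∂μ := by
          refine lintegral_mono fun x => ?_
          calc f (k+n) x * κ x A ≤ 1 * κ x A := mul_le_mul_left (hf1 x) _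
            _ = κ x A := one_mul _
        have hle : μ ≤ ε⁻¹ ^ n • nuChain κ n := by
          rw [Measure.le_iff]
          intro s hs
          rw [Measure.smul_apply, smul_eq_mul]
          exact hdom s hs
        have e3 : ∫⁻ x, κ x A ∂μ ≤ ε⁻¹ ^ n * ∫⁻ x, κ x A ∂(nuChain κ n) := by
          calc ∫⁻ x, κ x A ∂μ ≤ ∫⁻ x, κ x A ∂(ε⁻¹ ^ n • nuChain κ n) :=
              lintegral_mono' hle le_rfl
            _ = ε⁻¹ ^ n * ∫⁻ x, κ x A ∂(nuChain κ n) := lintegral_smul_measure _ _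
        have e4 : ∫⁻ x, κ x A ∂(nuChain κ n) = nuChain κ (n+1) A := by
          have : nuChain κ (n+1) = (nuChain κ n).bind κ := rfl
          rw [this, Measure.bind_apply hA (measurable_kappa hκ).aemeasurable]
        calc mupredAux κ f k (n+1) A = q⁻¹ * ∫⁻ x, f (k+n) x * κ x A ∂μ := e1
          _ ≤ ε⁻¹ * (ε⁻¹ ^ n * nuChain κ (n+1) A) := by
              refine mul_le_mul' (ENNReal.inv_le_inv.2 hq0) ?_
              rw [← e4]; exact e2.trans e3
          _ = ε⁻¹ ^ (n+1) * nuChain κ (n+1) A := by rw [pow_succ, mul_comm (ε⁻¹ ^ n) ε⁻¹, mul_assoc]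

end AuxLemmas2

section AuxLemmas3
open ProbabilityTheory

variable {κ : S → Measure S}

lemma mupred_succ (f : ℕ → S → ℝ≥0∞) (k j : ℕ) (hkj : k ≤ j) :
    mupred κ f k (j+1) = (mucond κ f k j).bind κ := by
  rw [mupred, show j + 1 - k = (j - k) + 1 by omega]
  show (condMeas f (k + (j - k)) (mupredAux κ f k (j - k))).bind κ = _
  rw [show k + (j - k) = j by omega]
  rfl

lemma claimA (hκ : IsMarkov κ) (c' : ℕ → ℝ) (k N j₀ : ℕ) (hj₀N : j₀ ≤ N) (xh : ℕ → S)
    (f : ℕ → S → ℝ≥0∞) (hf : ∀ l, k ≤ l → l ≤ N → Measurable (f l) ∧ ∀ x, f l x ≤ 1)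
    (ε : ℝ≥0∞) (hε : 0 < ε)
    (hq : ∀ j, k ≤ j → j ≤ j₀ → ε ≤ qq κ f k j) :
    ∀ j, k ≤ j → j ≤ j₀ →
      ε ^ (j - k) * ∫⁻ x, VV κ c' N xh f j x ∂(mupred κ f k j) ≤ Cost κ c' k N xh f := by
  have hf' : ∀ l, k ≤ l → l ≤ j₀ → Measurable (f l) ∧ ∀ x, f l x ≤ 1 :=
    fun l h1 h2 => hf l h1 (h2.trans hj₀N)
  intro j hkj
  induction j, hkj using Nat.le_induction with
  | base =>
      intro _
      have h1 : mupred κ f k k = κ origin := by rw [mupred, Nat.sub_self]; rfl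
      rw [Nat.sub_self, pow_zero, one_mul, h1, Cost]
  | succ j hkj ih =>
      intro hj1
      have hjj₀ : j ≤ j₀ := by omega
      have hjN : j ≤ N := by omega
      -- measurability
      have hV1 : Measurable (VV κ c' N xh f (j+1)) := by
        apply measurable_Vaux hκ c' xh f (N + 1 - (j+1)) (j+1)
        intro l hl1 hl2
        exact (hf l (by omega) (by omega)).1
      have hI : Measurable fun x => ∫⁻ y, VV κ c' N xh f (j+1) y ∂(κ x) :=
        measurable_lint hκ hV1
      have hfj := (hf j (by omega) hjN).1
      have hfj1 := (hf j (by omega) hjN).2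
      -- probability of mupred at j
      haveI hprob : IsProbabilityMeasure (mupred κ f k j) := by
        have := (mupred_chain hκ f k j₀ hf' ε hε hq (j - k) (by omega)).1
        rwa [mupred]
      set μ := mupred κ f k j with hμdef
      set I := fun x => ∫⁻ y, VV κ c' N xh f (j+1) y ∂(κ x) with hIdef
      set q := qq κ f k j with hqdef
      have hqeq : q = ∫⁻ x, f j x ∂μ := rfl
      have hq0 : ε ≤ q := hq j (by omega) hjj₀
      have hq1 : q ≤ 1 := by rw [hqeq]; exact lintegral_le_one hfj1
      have hqne0 : q ≠ 0 := fun h => hε.ne' (le_antisymm (h ▸ hq0) bot_le)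
      have hqnet : q ≠ ⊤ := (hq1.trans_lt (by norm_num)).ne
      -- pointwise bound
      have hpt : ∀ x, f j x * I x ≤ VV κ c' N xh f j x := by
        intro x
        have hunf : VV κ c' N xh f j x =
            f j x * (ENNReal.ofReal (dS x (xh j) ^ 2)
              + ∫⁻ y, VV κ c' N xh f (j+1) y ∂(κ x))
            + (1 - f j x) * ENNReal.ofReal (c' j) := by
          simp only [VV, show N + 1 - j = (N - j) + 1 by omega,
            show N + 1 - (j+1) = N - j by omega]
          rfl
        rw [hunf]
        calc f j x * I x ≤ f j x * (ENNReal.ofReal (dS x (xh j) ^ 2) + I x) :=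
              mul_le_mul_right le_add_self _
          _ ≤ _ := self_le_add_right _ _
      -- chain
      have step1 : ∫⁻ x, f j x * I x ∂μ ≤ ∫⁻ x, VV κ c' N xh f j x ∂μ :=
        lintegral_mono hpt
      have step2 : ∫⁻ x, I x ∂(μ.withDensity (f j)) = ∫⁻ x, f j x * I x ∂μ := by
        rw [lintegral_withDensity_eq_lintegral_mul μ hfj hI]; rfl
      have step3 : μ.withDensity (f j) = q • mucond κ f k j := by
        show μ.withDensity (f j) = q • condMeas f j μ
        rw [condMeas, smul_smul, ← hqeq, ENNReal.mul_inv_cancel hqne0 hqnet, one_smul]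
      have step4 : ∫⁻ x, I x ∂(μ.withDensity (f j))
          = q * ∫⁻ x, I x ∂(mucond κ f k j) := by
        rw [step3, lintegral_smul_measure, smul_eq_mul]
      have step5 : ∫⁻ x, I x ∂(mucond κ f k j)
          = ∫⁻ y, VV κ c' N xh f (j+1) y ∂(mupred κ f k (j+1)) := by
        rw [mupred_succ f k j (by omega), Measure.lintegral_bind (measurable_kappa hκ).aemeasurable hV1.aemeasurable]
      have key : ε * ∫⁻ y, VV κ c' N xh f (j+1) y ∂(mupred κ f k (j+1))
          ≤ ∫⁻ x, VV κ c' N xh f j x ∂μ := by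
        calc ε * ∫⁻ y, VV κ c' N xh f (j+1) y ∂(mupred κ f k (j+1))
            ≤ q * ∫⁻ y, VV κ c' N xh f (j+1) y ∂(mupred κ f k (j+1)) :=
              mul_le_mul_left hq0 _
          _ = ∫⁻ x, I x ∂(μ.withDensity (f j)) := by rw [step4, step5]
          _ = ∫⁻ x, f j x * I x ∂μ := step2
          _ ≤ _ := step1
      calc ε ^ (j + 1 - k) * ∫⁻ x, VV κ c' N xh f (j+1) x ∂(mupred κ f k (j+1))
          = ε ^ (j - k) * (ε * ∫⁻ x, VV κ c' N xh f (j+1) x ∂(mupred κ f k (j+1))) := by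
            rw [show j + 1 - k = (j - k) + 1 by omega, pow_succ, mul_assoc]
        _ ≤ ε ^ (j - k) * ∫⁻ x, VV κ c' N xh f j x ∂μ := mul_le_mul_right key _
        _ ≤ Cost κ c' k N xh f := ih hjj₀

end AuxLemmas3

/-- If `f^(i) ∈ 𝔓(x̂^(i−1))` for all `i` and the quantities `q_j^(i)` are uniformly
bounded below by `ε > 0` for `j ∈ {k, …, j₀}`, then for each such `j` the set of
estimates `{x̂_j^(i)}` is `d`-bounded. (Here `fseq i` plays the role of `f^(i+1)`
and `xhat i` that of `x̂^(i)`.) -/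
theorem estimates_bounded (κ : S → Measure S) (hκ : IsMarkov κ)
    (hA : Assumption1 κ)
    (k N : ℕ) (hkN : k ≤ N) (c' : ℕ → ℝ) (hc' : ∀ j, k ≤ j → j ≤ N → 0 < c' j)
    (j₀ : ℕ) (hkj₀ : k ≤ j₀) (hj₀N : j₀ ≤ N)
    (xhat : ℕ → ℕ → S) (fseq : ℕ → ℕ → S → ℝ≥0∞)
    (hP : ∀ i, inP κ c' k N (xhat i) (fseq i))
    (ε : ℝ≥0∞) (hε : 0 < ε)
    (hq : ∀ i j, k ≤ j → j ≤ j₀ → ε ≤ qq κ (fseq i) k j) :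
    ∀ j, k ≤ j → j ≤ j₀ → ∃ R : ℝ, ∀ i, dS origin (xhat i j) ≤ R := by
  intro j hkj hjj₀
  have hjN : j ≤ N := hjj₀.trans hj₀N
  set m := j - k with hmdef
  -- ε is at most 1 (hence finite)
  have hε1 : ε ≤ 1 := by
    have h0 := hq 0 k le_rfl hkj₀
    have hf0 := (hP 0).1
    haveI : IsProbabilityMeasure (mupred κ (fseq 0) k k) := by
      rw [mupred, Nat.sub_self]
      exact hκ.1 origin
    refine h0.trans ?_
    exact lintegral_le_one (hf0 k le_rfl hkN).2
  have hεt : ε ≠ ⊤ := (hε1.trans_lt (by norm_num)).ne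
  have hε2t : ε / 2 ≠ ⊤ := (ENNReal.div_lt_top hεt (by norm_num)).ne
  -- the fixed reference measure and the ball choice
  set ν := nuChain κ m with hνdef
  haveI := nuChain_prob hκ m
  set δ := ε ^ m * (ε / 2) with hδdef
  have hδ0 : 0 < δ :=
    ENNReal.mul_pos (pow_ne_zero m hε.ne') (ENNReal.div_pos hε.ne' ENNReal.ofNat_ne_top).ne'
  have hδt : δ ≠ ⊤ := ENNReal.mul_ne_top (ENNReal.pow_ne_top hεt) hε2t
  have hCm : ∀ M : ℕ, MeasurableSet {x : S | (M : ℝ) < dS origin x} :=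
    fun M => (measurable_dS_left origin) measurableSet_Ioi
  obtain ⟨M, hM⟩ : ∃ M : ℕ, ν {x : S | (M : ℝ) < dS origin x} < δ := by
    have hanti : Antitone fun M : ℕ => {x : S | (M : ℝ) < dS origin x} := by
      intro a b hab x hx
      exact lt_of_le_of_lt ((Nat.cast_le (α := ℝ)).2 hab) hx
    have hempty : ⋂ M : ℕ, {x : S | (M : ℝ) < dS origin x} = ∅ := by
      ext x
      simp only [Set.mem_iInter, Set.mem_setOf_eq, Set.mem_empty_iff_false, iff_false, not_forall,
        not_lt]
      obtain ⟨M, hM⟩ := exists_nat_gt (dS origin x)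
      exact ⟨M, hM.le⟩
    have htend := tendsto_measure_iInter_atTop (μ := ν)
      (fun M => (hCm M).nullMeasurableSet) hanti ⟨0, measure_ne_top ν _⟩
    rw [hempty] at htend
    simp only [measure_empty] at htend
    exact (htend.eventually_lt_const hδ0).exists
  -- the uniform radius
  set K := ENNReal.ofReal (c' k) / δ with hKdef
  have hKt : K ≠ ⊤ := (ENNReal.div_lt_top ENNReal.ofReal_ne_top hδ0.ne').ne
  refine ⟨(M : ℝ) + Real.sqrt K.toReal, fun i => ?_⟩
  by_cases hR' : dS origin (xhat i j) ≤ (M : ℝ)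
  · exact hR'.trans (le_add_of_nonneg_right (Real.sqrt_nonneg _))
  push_neg at hR'
  set f := fseq i with hfdef
  set xh := xhat i with hxhdef
  set R' := dS origin (xh j) with hR'def
  have hf : ∀ l, k ≤ l → l ≤ N → Measurable (f l) ∧ ∀ x, f l x ≤ 1 := (hP i).1
  have hf' : ∀ l, k ≤ l → l ≤ j₀ → Measurable (f l) ∧ ∀ x, f l x ≤ 1 :=
    fun l h1 h2 => hf l h1 (h2.trans hj₀N)
  have hq' : ∀ j', k ≤ j' → j' ≤ j₀ → ε ≤ qq κ f k j' := fun j' h1 h2 => hq i j' h1 h2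
  -- cost is at most c' k
  have hCost : Cost κ c' k N xh f ≤ ENNReal.ofReal (c' k) := by
    have h0 : IsPolicy k N (fun _ _ => (0 : ℝ≥0∞)) :=
      fun j _ _ => ⟨measurable_const, fun x => zero_le_one⟩
    have := (hP i).2 (fun _ _ => 0) h0
    rwa [cost_zero hκ c' k N hkN xh] at this
  -- the predicted measure at stage j
  haveI hprob : IsProbabilityMeasure (mupred κ f k j) := by
    have := (mupred_chain hκ f k j₀ hf' ε hε hq' m (by omega)).1
    rwa [mupred, ← hmdef]
  have hdom := (mupred_chain hκ f k j₀ hf' ε hε hq' m (by omega)).2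
  set μ := mupred κ f k j with hμdef
  have hμdom : ∀ A : Set S, MeasurableSet A → μ A ≤ ε⁻¹ ^ m * ν A := by
    intro A hA
    have := hdom A hA
    rwa [show mupredAux κ f k m = μ by rw [hμdef, mupred, ← hmdef]] at this
  -- the ball
  set B := {x : S | dS origin x ≤ (M : ℝ)} with hBdef
  have hB : MeasurableSet B := (measurable_dS_left origin) measurableSet_Iic
  have hBc : Bᶜ = {x : S | (M : ℝ) < dS origin x} := by
    ext x; simp [hBdef, not_le]
  -- lower bound on the conditioned mass of B
  have hfj := (hf j hkj hjN).1
  have hfj1 := (hf j hkj hjN).2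
  have hqeq : qq κ f k j = ∫⁻ x, f j x ∂μ := rfl
  have hεq : ε ≤ ∫⁻ x, f j x ∂μ := hqeq ▸ hq' j hkj hjj₀
  have hBcsmall : ∫⁻ x in Bᶜ, f j x ∂μ ≤ ε / 2 := by
    calc ∫⁻ x in Bᶜ, f j x ∂μ ≤ ∫⁻ _ in Bᶜ, 1 ∂μ := lintegral_mono hfj1
      _ = μ Bᶜ := by simp
      _ ≤ ε⁻¹ ^ m * ν Bᶜ := hμdom Bᶜ hB.compl
      _ ≤ ε⁻¹ ^ m * δ := by
          refine mul_le_mul_right ?_ _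
          rw [hBc]; exact hM.le
      _ = ε / 2 := by
          rw [hδdef, ← mul_assoc, ← mul_pow, ENNReal.inv_mul_cancel hε.ne' hεt, one_pow, one_mul]
  have hBbig : ε / 2 ≤ ∫⁻ x in B, f j x ∂μ := by
    have hsplit : ∫⁻ x in B, f j x ∂μ + ∫⁻ x in Bᶜ, f j x ∂μ = ∫⁻ x, f j x ∂μ :=
      lintegral_add_compl (f j) hB
    have h1 : ε / 2 + ε / 2 ≤ ∫⁻ x in B, f j x ∂μ + ε / 2 := by
      rw [ENNReal.add_halves]
      calc ε ≤ ∫⁻ x, f j x ∂μ := hεq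
        _ = ∫⁻ x in B, f j x ∂μ + ∫⁻ x in Bᶜ, f j x ∂μ := hsplit.symm
        _ ≤ ∫⁻ x in B, f j x ∂μ + ε / 2 := add_le_add_right hBcsmall _
    exact (ENNReal.add_le_add_iff_right hε2t).1 h1
  -- pointwise lower bound for the instantaneous cost on B
  set r := ENNReal.ofReal ((R' - (M : ℝ)) ^ 2) with hrdef
  have hrt : r ≠ ⊤ := ENNReal.ofReal_ne_top
  have hrD : ∀ x ∈ B, r ≤ ENNReal.ofReal (dS x (xh j) ^ 2) := by
    intro x hx
    apply ENNReal.ofReal_le_ofReal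
    have htri : R' ≤ dS origin x + dS x (xh j) := dS_triangle origin x (xh j)
    have h1 : R' - (M : ℝ) ≤ dS x (xh j) := by
      have := hx
      simp only [hBdef, Set.mem_setOf_eq] at this
      linarith
    have h2 : (0 : ℝ) ≤ R' - (M : ℝ) := by linarith [hR'.le]
    calc (R' - (M : ℝ)) ^ 2 ≤ dS x (xh j) ^ 2 := by nlinarith [dS_nonneg x (xh j)]
      _ = dS x (xh j) ^ 2 := rfl
  -- pointwise lower bound on VV
  have hpt : ∀ x, f j x * ENNReal.ofReal (dS x (xh j) ^ 2) ≤ VV κ c' N xh f j x := by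
    intro x
    have hunf : VV κ c' N xh f j x =
        f j x * (ENNReal.ofReal (dS x (xh j) ^ 2)
          + ∫⁻ y, VV κ c' N xh f (j+1) y ∂(κ x))
        + (1 - f j x) * ENNReal.ofReal (c' j) := by
      simp only [VV, show N + 1 - j = (N - j) + 1 by omega,
        show N + 1 - (j+1) = N - j by omega]
      rfl
    rw [hunf]
    calc f j x * ENNReal.ofReal (dS x (xh j) ^ 2)
        ≤ f j x * (ENNReal.ofReal (dS x (xh j) ^ 2)
            + ∫⁻ y, VV κ c' N xh f (j+1) y ∂(κ x)) :=
          mul_le_mul_right (self_le_add_right _ _) _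
      _ ≤ _ := self_le_add_right _ _
  -- final chain
  have hbound : r * δ ≤ ENNReal.ofReal (c' k) := by
    have hL : r * (ε / 2) ≤ ∫⁻ x, VV κ c' N xh f j x ∂μ := by
      calc r * (ε / 2) ≤ r * ∫⁻ x in B, f j x ∂μ := mul_le_mul_right hBbig _
        _ = ∫⁻ x in B, r * f j x ∂μ := (lintegral_const_mul' r _ hrt).symm
        _ ≤ ∫⁻ x in B, f j x * ENNReal.ofReal (dS x (xh j) ^ 2) ∂μ := by
            refine setLIntegral_mono' hB fun x hx => ?_
            rw [mul_comm]
            exact mul_le_mul_right (hrD x hx) _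
        _ ≤ ∫⁻ x, f j x * ENNReal.ofReal (dS x (xh j) ^ 2) ∂μ :=
            setLIntegral_le_lintegral _ _
        _ ≤ ∫⁻ x, VV κ c' N xh f j x ∂μ := lintegral_mono hpt
    calc r * δ = ε ^ m * (r * (ε / 2)) := by
          rw [hδdef]; ring
      _ ≤ ε ^ m * ∫⁻ x, VV κ c' N xh f j x ∂μ := mul_le_mul_right hL _
      _ = ε ^ (j - k) * ∫⁻ x, VV κ c' N xh f j x ∂(mupred κ f k j) := by rw [hmdef]
      _ ≤ Cost κ c' k N xh f := claimA hκ c' k N j₀ hj₀N xh f hf ε hε hq' j hkj hjj₀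
      _ ≤ ENNReal.ofReal (c' k) := hCost
  have hrK : r ≤ K := by
    rw [hKdef]
    exact (ENNReal.le_div_iff_mul_le (Or.inl hδ0.ne') (Or.inr ENNReal.ofReal_ne_top)).2 hbound
  have hreal : (R' - (M : ℝ)) ^ 2 ≤ K.toReal :=
    (ENNReal.ofReal_le_iff_le_toReal hKt).1 hrK
  have : R' - (M : ℝ) ≤ Real.sqrt K.toReal := by
    calc R' - (M : ℝ) ≤ |R' - (M : ℝ)| := le_abs_self _
      _ = Real.sqrt ((R' - (M : ℝ)) ^ 2) := (Real.sqrt_sq_eq_abs _).symm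
      _ ≤ Real.sqrt K.toReal := Real.sqrt_le_sqrt hreal
  linarith

end
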